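/- The pure cactus group PJ₃ is isomorphic to the additive group of integers ℤ; explicitly, the map ℤ → PJ₃ sending j to (s₁₂·s₁₃)^{3j} is a group isomorphism onto PJ₃. -/

import Mathlib

/-- Generators of the cactus group `J₃`. -/
inductive CactusGen : Type
  | s12 | s23 | s13
  deriving DecidableEq

open FreeGroup in
/-- Relators of the cactus group `J₃`:
`s₁₂² = s₂₃² = s₁₃² = 1`, `s₁₂·s₁₃ = s₁₃·s₂₃`, `s₂₃·s₁₃ = s₁₃·s₁₂`. -/
def cactusRels : Set (FreeGroup CactusGen) :=
  { of .s12 * of .s12,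
    of .s23 * of .s23,
    of .s13 * of .s13,
    of .s12 * of .s13 * (of .s13 * of .s23)⁻¹,
    of .s23 * of .s13 * (of .s13 * of .s12)⁻¹ }

/-- The cactus group `J₃` as a presented group. -/
abbrev J3 : Type := PresentedGroup cactusRels

def s12 : J3 := PresentedGroup.of .s12
def s23 : J3 := PresentedGroup.of .s23
def s13 : J3 := PresentedGroup.of .s13

/-- The images of the generators in the symmetric group on three letters:
`s₁₂ ↦ (1 2)`, `s₂₃ ↦ (2 3)`, `s₁₃ ↦ (1 3)`. -/
def genPerm : CactusGen → Equiv.Perm (Fin 3)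
  | .s12 => Equiv.swap 0 1
  | .s23 => Equiv.swap 1 2
  | .s13 => Equiv.swap 0 2

theorem cactusRels_hold : ∀ r ∈ cactusRels, FreeGroup.lift genPerm r = 1 := by
  intro r hr
  simp only [cactusRels, Set.mem_insert_iff, Set.mem_singleton_iff] at hr
  rcases hr with h | h | h | h | h <;> subst h <;>
    simp only [map_mul, map_inv, FreeGroup.lift_apply_of] <;> decide

/-- The canonical projection `π : J₃ → S₃`; its kernel is the pure cactus group `PJ₃`. -/
def piJ3 : J3 →* Equiv.Perm (Fin 3) := PresentedGroup.toGroup cactusRels_hold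

/-! ### Auxiliary material -/

/-- The comparison map to the infinite dihedral group. -/
def genDih : CactusGen → DihedralGroup 0
  | .s12 => .sr 0
  | .s13 => .sr 1
  | .s23 => .sr 2

theorem cactusRels_hold_dih : ∀ r ∈ cactusRels, FreeGroup.lift genDih r = 1 := by
  intro r hr
  simp only [cactusRels, Set.mem_insert_iff, Set.mem_singleton_iff] at hr
  rcases hr with h | h | h | h | h <;> subst h <;>
    simp only [map_mul, map_inv, FreeGroup.lift_apply_of] <;> decide

def phiDih : J3 →* DihedralGroup 0 := PresentedGroup.toGroup cactusRels_hold_dih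

lemma r_inv_eq (a : ZMod 0) : (DihedralGroup.r a : DihedralGroup 0)⁻¹ = .r (-a) := rfl

lemma r_one_zpow (n : ℤ) : (DihedralGroup.r 1 : DihedralGroup 0) ^ n = .r n := by
  cases n with
  | ofNat k => rw [Int.ofNat_eq_coe, zpow_natCast, DihedralGroup.r_one_pow]; norm_cast
  | negSucc k => rw [zpow_negSucc, DihedralGroup.r_one_pow, r_inv_eq]; congr 1

lemma rel_to_one {r : FreeGroup CactusGen} (h : r ∈ cactusRels) :
    PresentedGroup.mk cactusRels r = 1 :=
  (QuotientGroup.eq_one_iff r).mpr (Subgroup.subset_normalClosure h)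

lemma h12 : s12 * s12 = 1 := by
  have h := rel_to_one (r := .of .s12 * .of .s12) (by simp [cactusRels])
  rw [map_mul] at h; exact h

lemma h13 : s13 * s13 = 1 := by
  have h := rel_to_one (r := .of .s13 * .of .s13) (by simp [cactusRels])
  rw [map_mul] at h; exact h

lemma hrel1 : s12 * s13 = s13 * s23 := by
  have h := rel_to_one (r := .of .s12 * .of .s13 * (.of .s13 * .of .s23)⁻¹)
    (by simp [cactusRels])
  rw [map_mul, map_inv, map_mul, map_mul] at h
  exact mul_inv_eq_one.mp h

lemma hrel2 : s23 * s13 = s13 * s12 := by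
  have h := rel_to_one (r := .of .s23 * .of .s13 * (.of .s13 * .of .s12)⁻¹)
    (by simp [cactusRels])
  rw [map_mul, map_inv, map_mul, map_mul] at h
  exact mul_inv_eq_one.mp h

/-- The "rotation" `t = s₁₂ s₁₃`. -/
def tJ : J3 := s12 * s13

lemma s12_inv : s12⁻¹ = s12 := inv_eq_of_mul_eq_one_right h12
lemma s13_inv : s13⁻¹ = s13 := inv_eq_of_mul_eq_one_right h13

lemma tJ_inv : tJ⁻¹ = s13 * s12 := by
  rw [tJ, mul_inv_rev, s12_inv, s13_inv]

lemma s13_eq : s13 = tJ⁻¹ * s12 := by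
  rw [tJ_inv, mul_assoc, h12, mul_one]

lemma s23_eq : s23 = tJ⁻¹ * tJ⁻¹ * s12 := by
  have h : s23 = s13 * s12 * s13 := by
    have := hrel2
    calc s23 = s23 * (s13 * s13) := by rw [h13, mul_one]
    _ = s23 * s13 * s13 := by rw [mul_assoc]
    _ = s13 * s12 * s13 := by rw [hrel2]
  rw [h, s13_eq]
  calc tJ⁻¹ * s12 * s12 * (tJ⁻¹ * s12)
      = tJ⁻¹ * (s12 * s12) * (tJ⁻¹ * s12) := by group
    _ = tJ⁻¹ * tJ⁻¹ * s12 := by rw [h12]; group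

lemma conj_tJ : s12 * tJ * s12⁻¹ = tJ⁻¹ := by
  rw [s12_inv, tJ_inv, tJ]
  calc s12 * (s12 * s13) * s12 = (s12 * s12) * (s13 * s12) := by group
    _ = s13 * s12 := by rw [h12, one_mul]

lemma s12_zpow_comm (n : ℤ) : s12 * tJ ^ n = tJ ^ (-n) * s12 := by
  have h := (map_zpow (MulAut.conj s12) tJ n).symm
  simp only [MulAut.conj_apply] at h
  rw [conj_tJ, inv_zpow, ← zpow_neg] at h
  calc s12 * tJ ^ n = s12 * tJ ^ n * s12⁻¹ * s12 := by group
    _ = tJ ^ (-n) * s12 := by rw [h]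

/-- The subgroup argument: every element of `J3` has the form `t^n` or `t^n·s12`. -/
def dihForm : Subgroup J3 where
  carrier := {x | ∃ n : ℤ, x = tJ ^ n ∨ x = tJ ^ n * s12}
  one_mem' := ⟨0, Or.inl (zpow_zero _).symm⟩
  mul_mem' := by
    rintro a b ⟨m, hm | hm⟩ ⟨n, hn | hn⟩ <;> subst hm <;> subst hn
    · exact ⟨m + n, Or.inl (zpow_add tJ m n).symm⟩
    · exact ⟨m + n, Or.inr (by rw [← mul_assoc, ← zpow_add])⟩
    · refine ⟨m - n, Or.inr ?_⟩
      rw [mul_assoc, s12_zpow_comm, ← mul_assoc, ← zpow_add, sub_eq_add_neg]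
    · refine ⟨m - n, Or.inl ?_⟩
      calc tJ ^ m * s12 * (tJ ^ n * s12)
          = tJ ^ m * (s12 * tJ ^ n) * s12 := by group
        _ = tJ ^ m * (tJ ^ (-n) * s12) * s12 := by rw [s12_zpow_comm]
        _ = tJ ^ m * tJ ^ (-n) * (s12 * s12) := by group
        _ = tJ ^ (m - n) := by rw [h12, mul_one, ← zpow_add, sub_eq_add_neg]
  inv_mem' := by
    rintro x ⟨n, h | h⟩ <;> subst h
    · exact ⟨-n, Or.inl (zpow_neg tJ n).symm⟩
    · refine ⟨n, Or.inr ?_⟩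
      rw [mul_inv_rev, s12_inv, ← zpow_neg, s12_zpow_comm, neg_neg]

lemma mem_dihForm (x : J3) : x ∈ dihForm := by
  refine PresentedGroup.generated_by cactusRels dihForm (fun j => ?_) x
  cases j with
  | s12 => exact ⟨0, Or.inr (by rw [zpow_zero, one_mul]; rfl)⟩
  | s13 => exact ⟨-1, Or.inr (by rw [zpow_neg_one]; exact s13_eq)⟩
  | s23 =>
      refine ⟨-2, Or.inr ?_⟩
      show s23 = tJ ^ (-2 : ℤ) * s12
      have h2 : tJ ^ (-2 : ℤ) = tJ⁻¹ * tJ⁻¹ := by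
        rw [show (-2 : ℤ) = -1 + -1 by norm_num, zpow_add, zpow_neg_one]
      rw [h2]; exact s23_eq

/-- The image of `t` in `S₃`. -/
def sigma : Equiv.Perm (Fin 3) := Equiv.swap 0 1 * Equiv.swap 0 2

lemma piJ3_s12 : piJ3 s12 = Equiv.swap 0 1 := PresentedGroup.toGroup.of _
lemma piJ3_s13 : piJ3 s13 = Equiv.swap 0 2 := PresentedGroup.toGroup.of _

lemma piJ3_tJ : piJ3 tJ = sigma := by
  rw [tJ, map_mul, piJ3_s12, piJ3_s13]; rfl

lemma sigma_zpow_three : sigma ^ (3 : ℤ) = 1 := by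
  rw [show (3 : ℤ) = ((3 : ℕ) : ℤ) from rfl, zpow_natCast]; decide

lemma phiDih_s12 : phiDih s12 = .sr 0 := PresentedGroup.toGroup.of _
lemma phiDih_s13 : phiDih s13 = .sr 1 := PresentedGroup.toGroup.of _

lemma phiDih_tJ : phiDih tJ = .r 1 := by
  rw [tJ, map_mul, phiDih_s12, phiDih_s13]; decide

lemma tJ_zpow_inj {a b : ℤ} (h : tJ ^ a = tJ ^ b) : a = b := by
  have h2 := congrArg phiDih h
  rw [map_zpow, map_zpow, phiDih_tJ, r_one_zpow, r_one_zpow] at h2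
  exact DihedralGroup.r.inj h2

/-- `PJ₃ ≅ ℤ`; explicitly, `j ↦ (s₁₂·s₁₃)^{3j}` is a group isomorphism from
the additive group `ℤ` onto `PJ₃ = ker π`. -/
theorem PJ3_iso_int :
    ∃ f : ℤ → MonoidHom.ker piJ3,
      (∀ j : ℤ, (f j : J3) = (s12 * s13) ^ (3 * j)) ∧
        Function.Bijective f ∧ ∀ i j : ℤ, f (i + j) = f i * f j := by
  have hker : ∀ j : ℤ, tJ ^ (3 * j) ∈ MonoidHom.ker piJ3 := by
    intro j
    rw [MonoidHom.mem_ker, map_zpow, piJ3_tJ, zpow_mul, sigma_zpow_three, one_zpow]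
  refine ⟨fun j => ⟨tJ ^ (3 * j), hker j⟩, fun j => rfl, ⟨?_, ?_⟩, ?_⟩
  · -- injective
    intro i j hij
    have h : tJ ^ (3 * i) = tJ ^ (3 * j) := congrArg Subtype.val hij
    have := tJ_zpow_inj h
    omega
  · -- surjective
    rintro ⟨x, hx⟩
    rw [MonoidHom.mem_ker] at hx
    obtain ⟨n, h | h⟩ := mem_dihForm x
    · subst h
      rw [map_zpow, piJ3_tJ] at hx
      -- σ^n = 1 forces 3 ∣ n
      have hmod : n % 3 = 0 := by
        have hn : n = 3 * (n / 3) + n % 3 := (Int.mul_ediv_add_emod n 3).symm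
        have h1 : sigma ^ (n % 3) = 1 := by
          calc sigma ^ (n % 3) = (sigma ^ (3 : ℤ)) ^ (n / 3) * sigma ^ (n % 3) := by
                rw [sigma_zpow_three, one_zpow, one_mul]
            _ = sigma ^ (3 * (n / 3) + n % 3) := by rw [← zpow_mul, ← zpow_add]
            _ = 1 := by rw [← hn]; exact hx
        have hcases : n % 3 = 0 ∨ n % 3 = 1 ∨ n % 3 = 2 := by omega
        rcases hcases with h0 | h0 | h0
        · exact h0
        · exfalso; rw [h0, zpow_one] at h1; exact absurd h1 (by decide)
        · exfalso
          rw [h0, show (2 : ℤ) = ((2 : ℕ) : ℤ) from rfl, zpow_natCast] at h1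
          exact absurd h1 (by decide)
      refine ⟨n / 3, Subtype.ext ?_⟩
      show tJ ^ (3 * (n / 3)) = tJ ^ n
      congr 1
      omega
    · -- impossible: odd permutation in the kernel
      exfalso
      subst h
      have hs := congrArg Equiv.Perm.sign hx
      rw [map_mul, map_zpow, piJ3_tJ, piJ3_s12, map_mul, map_zpow] at hs
      have h1 : Equiv.Perm.sign sigma = 1 := by decide
      have h2 : Equiv.Perm.sign (Equiv.swap (0 : Fin 3) 1) = -1 := by decide
      rw [h1, one_zpow, one_mul, h2] at hs
      exact absurd hs (by decide)
  · -- additivity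
    intro i j
    refine Subtype.ext ?_
    show tJ ^ (3 * (i + j)) = tJ ^ (3 * i) * tJ ^ (3 * j)
    rw [← zpow_add, mul_add]
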